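/- Let 1 → G → H →π J → 1 be an extension of finite groups with set-theoretic section s : J → H, s(1) = 1. Then the linear map Ψ : D^J(G) ⊗ K[J] → D(H), (δ_h ⊗ g ⊗ j) ↦ δ_h ⊗ g s(j), is an algebra isomorphism from the orbifold algebra of D^J(G) (with weak J-action φ_j(δ_h ⊗ g) = δ_{s(j)h s(j)⁻¹} ⊗ s(j)g s(j)⁻¹ and coherence elements c_{i,j} = ∑_{h∈H} δ_h ⊗ s(i)s(j)s(ij)⁻¹) to the Drinfel'd double D(H). -/
import Mathlib


open Finset

variable {K H J : Type*} [Field K] [Group H] [Group J]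

/-- Product of the Drinfel'd double `D(H)` (functions `H × H → K`, `x (h, h')` being
the coefficient of `δ_h ⊗ h'`). -/
def doubleMul [Fintype H] (x y : H × H → K) : H × H → K :=
  fun p => ∑ h : H, x (p.1, h) * y (h⁻¹ * p.1 * h, h⁻¹ * p.2)

/-- The unit `∑_h δ_h ⊗ 1` of `D(H)`. -/
def doubleOne [DecidableEq H] : H × H → K :=
  fun p => if p.2 = 1 then 1 else 0

/-- The Hopf subalgebra `D^J(G) ⊆ D(H)` (with `G = ker π`), modelled as functions
`H × ker π → K`; its product inherited from `D(H)`. -/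
def djMul (π : H →* J) [Fintype π.ker] (x y : H × π.ker → K) : H × π.ker → K :=
  fun p => ∑ g : π.ker, x (p.1, g) * y ((g : H)⁻¹ * p.1 * g, g⁻¹ * p.2)

/-- The weak `J`-action `φ_j(δ_h ⊗ g) = δ_{s(j) h s(j)⁻¹} ⊗ s(j) g s(j)⁻¹` on
`D^J(G)`. -/
def djPhi (π : H →* J) (s : J → H) (hs : ∀ j, π (s j) = j) (j : J)
    (x : H × π.ker → K) : H × π.ker → K :=
  fun p => x ((s j)⁻¹ * p.1 * s j,
    ⟨(s j)⁻¹ * (p.2 : H) * s j, by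
      have h2 : π (p.2 : H) = 1 := p.2.2
      simp [MonoidHom.mem_ker, h2, hs]⟩)

/-- The coherence elements `c_{i,j} = ∑_{h ∈ H} δ_h ⊗ s(i)s(j)s(ij)⁻¹` of the weak
`J`-action on `D^J(G)`. -/
def djC [DecidableEq H] (π : H →* J) (s : J → H) (i j : J) : H × π.ker → K :=
  fun p => if (p.2 : H) = s i * s j * (s (i * j))⁻¹ then 1 else 0

/-- The multiplication of the orbifold algebra of `D^J(G)` (modelled as functions
`(H × ker π) × J → K`): `(a ⊗ i)(b ⊗ j) = a φ_i(b) c_{i,j} ⊗ ij`. -/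
def djOrbMul (π : H →* J) [Fintype J] [Fintype π.ker] [DecidableEq H]
    (s : J → H) (hs : ∀ j, π (s j) = j)
    (X Y : (H × π.ker) × J → K) : (H × π.ker) × J → K :=
  fun q => ∑ i : J,
    djMul π (djMul π (fun p => X (p, i))
        (djPhi π s hs i (fun p => Y (p, i⁻¹ * q.2))))
      (djC π s i (i⁻¹ * q.2)) q.1

/-- The unit `1_{D^J(G)} ⊗ 1_J` of the orbifold algebra. -/
def djOrbOne [DecidableEq H] [DecidableEq J] (π : H →* J) :
    (H × π.ker) × J → K :=
  fun q => if (q.1.2 : H) = 1 ∧ q.2 = 1 then 1 else 0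

/-- The linear map `Ψ : D^J(G) ⊗ K[J] → D(H)`, `δ_h ⊗ g ⊗ j ↦ δ_h ⊗ g s(j)`. -/
def djPsi (π : H →* J) (s : J → H) (hs : ∀ j, π (s j) = j)
    (X : (H × π.ker) × J → K) : H × H → K :=
  fun p => X ((p.1, ⟨p.2 * (s (π p.2))⁻¹, by
    simp [MonoidHom.mem_ker, hs]⟩), π p.2)


/-- Auxiliary bijection `J × ker π ≃ H`, `(i, g) ↦ g * s i`. -/
def secEquiv (π : H →* J) (s : J → H) (hs : ∀ j, π (s j) = j) : J × π.ker ≃ H where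
  toFun q := (q.2 : H) * s q.1
  invFun h := (π h, ⟨h * (s (π h))⁻¹, by simp [MonoidHom.mem_ker, map_mul, hs]⟩)
  left_inv q := by
    obtain ⟨i, g⟩ := q
    have hg : π (g : H) = 1 := g.2
    have h1 : π ((g : H) * s i) = i := by simp [map_mul, hg, hs]
    refine Prod.ext h1 (Subtype.ext ?_)
    simp only [h1]
    group
  right_inv h := by simp [hs]

/-- Let `1 → G → H → J → 1` be an extension of finite groups with set-theoretic
section `s` of `π`, `s 1 = 1`. The map `Ψ : D^J(G) ⊗ K[J] → D(H)`,
`δ_h ⊗ g ⊗ j ↦ δ_h ⊗ g s(j)`, is an isomorphism of algebras from the orbifold algebra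
of `D^J(G)` (with the weak `J`-action `φ_j = conjugation by s(j)` and coherence
elements `c_{i,j} = ∑_h δ_h ⊗ s(i)s(j)s(ij)⁻¹`) onto the Drinfel'd double `D(H)`. -/
theorem djPsi_algebra_iso [Fintype H] [Fintype J] [DecidableEq H] [DecidableEq J]
    (π : H →* J) (hπ : Function.Surjective π)
    (s : J → H) (hs : ∀ j, π (s j) = j) (hs1 : s 1 = 1) :
    -- Ψ is linear
    (∀ X Y : (H × π.ker) × J → K,
      djPsi π s hs (X + Y) = djPsi π s hs X + djPsi π s hs Y) ∧
    (∀ (k : K) (X : (H × π.ker) × J → K),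
      djPsi π s hs (k • X) = k • djPsi π s hs X) ∧
    -- Ψ is bijective
    Function.Bijective (djPsi (K := K) π s hs) ∧
    -- Ψ is multiplicative and unital
    (∀ X Y : (H × π.ker) × J → K,
      djPsi π s hs (djOrbMul π s hs X Y)
        = doubleMul (djPsi π s hs X) (djPsi π s hs Y)) ∧
    djPsi π s hs (djOrbOne (K := K) π) = doubleOne := by
  refine ⟨fun X Y => rfl, fun k X => rfl, ?_, ?_, ?_⟩
  · -- bijectivity
    refine Function.bijective_iff_has_inverse.mpr
      ⟨fun x q => x (q.1.1, (q.1.2 : H) * s q.2), ?_, ?_⟩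
    · intro X
      funext q
      obtain ⟨⟨h, g⟩, j⟩ := q
      have hg : π (g : H) = 1 := g.2
      have h1 : π ((g : H) * s j) = j := by simp [map_mul, hg, hs]
      simp only [djPsi, h1]
      congr 1
      refine Prod.ext (Prod.ext rfl (Subtype.ext ?_)) rfl
      show (g : H) * s j * (s j)⁻¹ = (g : H)
      group
    · intro x
      funext p
      simp only [djPsi]
      congr 1
      simp
  · -- multiplicativity
    intro X Y
    funext p
    obtain ⟨p1, p2⟩ := p
    rw [show doubleMul (djPsi π s hs X) (djPsi π s hs Y) (p1, p2)
        = ∑ q : J × π.ker, djPsi π s hs X (p1, (secEquiv π s hs) q) *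
            djPsi π s hs Y (((secEquiv π s hs) q)⁻¹ * p1 * (secEquiv π s hs) q,
              ((secEquiv π s hs) q)⁻¹ * p2) from
      (Equiv.sum_comp (secEquiv π s hs)
        (fun h => djPsi π s hs X (p1, h) *
          djPsi π s hs Y (h⁻¹ * p1 * h, h⁻¹ * p2))).symm]
    rw [Fintype.sum_prod_type]
    simp only [djPsi, djOrbMul, secEquiv, Equiv.coe_fn_mk]
    refine Finset.sum_congr rfl fun i _ => ?_
    simp only [djMul, djC]
    -- collapse the sum over the coherence-element leg
    have hc0 : π (p2 * (s (i⁻¹ * π p2))⁻¹ * (s i)⁻¹) = 1 := by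
      simp only [map_mul, map_inv, hs]
      group
    rw [Finset.sum_eq_single (⟨p2 * (s (i⁻¹ * π p2))⁻¹ * (s i)⁻¹, hc0⟩ : π.ker)]
    rotate_left
    · intro b _ hb
      rw [if_neg, mul_zero]
      intro hcond
      simp only [InvMemClass.coe_inv, MulMemClass.coe_mul] at hcond
      apply hb
      refine Subtype.ext ?_
      have hb2 : (b : H) = (p2 * (s (π p2))⁻¹) *
          (s i * s (i⁻¹ * π p2) * (s (i * (i⁻¹ * π p2)))⁻¹)⁻¹ := by
        rw [← hcond]; group
      rw [hb2]
      simp only [mul_inv_cancel_left]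
      group
    · intro hn
      exact absurd (Finset.mem_univ _) hn
    rw [if_pos, mul_one]
    swap
    · simp only [InvMemClass.coe_inv, MulMemClass.coe_mul, mul_inv_cancel_left]
      group
    refine Finset.sum_congr rfl fun g _ => ?_
    simp only [djPhi]
    have hg : π (g : H) = 1 := g.2
    have h1 : π ((g : H) * s i) = i := by simp [map_mul, hg, hs]
    have h2 : π (((g : H) * s i)⁻¹ * p2) = i⁻¹ * π p2 := by
      rw [map_mul, map_inv, h1]
    congr 1
    · congr 1
      refine Prod.ext (Prod.ext rfl (Subtype.ext ?_)) h1.symm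
      show (g : H) = (g : H) * s i * (s (π ((g : H) * s i)))⁻¹
      rw [h1]; group
    · congr 1
      refine Prod.ext (Prod.ext ?_ (Subtype.ext ?_)) h2.symm
      · show (s i)⁻¹ * ((g : H)⁻¹ * p1 * g) * s i
            = ((g : H) * s i)⁻¹ * p1 * ((g : H) * s i)
        group
      · show (s i)⁻¹ * ((g⁻¹ * ⟨p2 * (s (i⁻¹ * π p2))⁻¹ * (s i)⁻¹, hc0⟩ : π.ker) : H) * s i
            = ((g : H) * s i)⁻¹ * p2 * (s (π (((g : H) * s i)⁻¹ * p2)))⁻¹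
        rw [h2]
        simp only [InvMemClass.coe_inv, MulMemClass.coe_mul]
        group
  · -- unitality
    funext p
    simp only [djPsi, djOrbOne, doubleOne]
    by_cases h : p.2 = 1
    · simp [h, hs1]
    · rw [if_neg, if_neg h]
      rintro ⟨h1, h2⟩
      rw [h2, hs1] at h1
      simp only [inv_one, mul_one] at h1
      exact h h1
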